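/- arXiv:1901.04044 — 8 statements merged into one kernel-verified Lean document; each statement's English description precedes it below -/
import Mathlib

section
/- For all n ≥ 0, ‖p_{n+1}‖² = ‖p_n‖² − c_{n+1}²/(2n+3), where the norm is the L²([0,1]) norm; consequently ‖p_n‖² = 1 − ∑_{k=1}^{n} c_k²/(2k+1). -/
open Finset

lemma int_sq (m : ℕ) (a : ℕ → ℝ) :
    (∫ x in (0:ℝ)..1, (∑ k ∈ range m, a k * x ^ k) ^ 2) =
      ∑ j ∈ range m, ∑ k ∈ range m, a j * a k / ((j : ℝ) + k + 1) := by
  have h : ∀ x : ℝ, (∑ k ∈ range m, a k * x ^ k) ^ 2 =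
      ∑ j ∈ range m, ∑ k ∈ range m, (a j * a k) * x ^ (j + k) := by
    intro x
    rw [sq, Finset.sum_mul_sum]
    refine Finset.sum_congr rfl fun j _ => Finset.sum_congr rfl fun k _ => ?_
    rw [pow_add]; ring
  have hint : ∀ j k : ℕ, IntervalIntegrable
      (fun x : ℝ => (a j * a k) * x ^ (j + k)) MeasureTheory.volume 0 1 :=
    fun j k => (continuous_const.mul (continuous_pow _)).intervalIntegrable 0 1
  have hint2 : ∀ j : ℕ, IntervalIntegrable
      (fun x : ℝ => ∑ k ∈ range m, (a j * a k) * x ^ (j + k))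
      MeasureTheory.volume 0 1 := by
    intro j
    exact (continuous_finset_sum _ (fun k _ =>
      continuous_const.mul (continuous_pow _))).intervalIntegrable 0 1
  simp only [h]
  rw [intervalIntegral.integral_finset_sum
    (f := fun (j : ℕ) (x : ℝ) => ∑ k ∈ range m, (a j * a k) * x ^ (j + k))
    (fun j _ => hint2 j)]
  refine Finset.sum_congr rfl fun j _ => ?_
  rw [intervalIntegral.integral_finset_sum
    (f := fun (k : ℕ) (x : ℝ) => (a j * a k) * x ^ (j + k))
    (fun k _ => hint j k)]
  refine Finset.sum_congr rfl fun k _ => ?_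
  rw [intervalIntegral.integral_const_mul, integral_pow]
  push_cast; ring

theorem norm_recurrence (c : ℕ → ℚ)
    (hc0 : c 0 = 1)
    (hrec : ∀ n : ℕ, 1 ≤ n →
      ∑ k ∈ Finset.range (n + 1), c k / ((n : ℚ) + 1 + (k : ℚ)) = 0) :
    (∀ n : ℕ,
      (∫ x in (0:ℝ)..1, (∑ k ∈ Finset.range (n + 2), (c k : ℝ) * x ^ k) ^ 2) =
        (∫ x in (0:ℝ)..1, (∑ k ∈ Finset.range (n + 1), (c k : ℝ) * x ^ k) ^ 2) -
          (c (n + 1) : ℝ) ^ 2 / (2 * (n : ℝ) + 3)) ∧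
    (∀ n : ℕ,
      (∫ x in (0:ℝ)..1, (∑ k ∈ Finset.range (n + 1), (c k : ℝ) * x ^ k) ^ 2) =
        1 - ∑ k ∈ Finset.Icc 1 n, (c k : ℝ) ^ 2 / (2 * (k : ℝ) + 1)) := by
  set a : ℕ → ℝ := fun k => (c k : ℝ) with ha
  -- key consequence of the recurrence, cast to ℝ
  have hT : ∀ n : ℕ, ∑ j ∈ range (n + 1), a j / ((n : ℝ) + 2 + j) =
      -(a (n + 1)) / (2 * (n : ℝ) + 3) := by
    intro n
    have hq := hrec (n + 1) (by omega)
    rw [Finset.sum_range_succ] at hq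
    have hq2 : ∑ k ∈ range (n + 1), c k / ((n : ℚ) + 2 + k) =
        -(c (n + 1)) / (2 * (n : ℚ) + 3) := by
      push_cast at hq
      have e : ∀ k ∈ range (n + 1),
          c k / ((n : ℚ) + 1 + 1 + k) = c k / ((n : ℚ) + 2 + k) := by
        intro k _; ring_nf
      rw [Finset.sum_congr rfl e] at hq
      have h3 : (n : ℚ) + 1 + 1 + ((n : ℚ) + 1) = 2 * (n : ℚ) + 3 := by ring
      rw [h3] at hq
      rw [neg_div]; linarith
    have := congrArg (fun q : ℚ => (q : ℝ)) hq2
    push_cast at this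
    convert this using 2
  have part1 : ∀ n : ℕ,
      (∫ x in (0:ℝ)..1, (∑ k ∈ Finset.range (n + 2), a k * x ^ k) ^ 2) =
        (∫ x in (0:ℝ)..1, (∑ k ∈ Finset.range (n + 1), a k * x ^ k) ^ 2) -
          (a (n + 1)) ^ 2 / (2 * (n : ℝ) + 3) := by
    intro n
    rw [int_sq, int_sq]
    have h1 : ∀ j ∈ range (n + 1),
        ∑ k ∈ range (n + 2), a j * a k / ((j : ℝ) + k + 1) =
        (∑ k ∈ range (n + 1), a j * a k / ((j : ℝ) + k + 1)) +
          a j * a (n + 1) / ((j : ℝ) + (n + 1 : ℕ) + 1) :=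
      fun j _ => Finset.sum_range_succ _ _
    rw [Finset.sum_range_succ, Finset.sum_congr rfl h1, Finset.sum_add_distrib,
      Finset.sum_range_succ (fun k => a (n + 1) * a k / (((n + 1 : ℕ) : ℝ) + k + 1))]
    have h2 : ∑ j ∈ range (n + 1), a j * a (n + 1) / ((j : ℝ) + (n + 1 : ℕ) + 1) =
        a (n + 1) * ∑ j ∈ range (n + 1), a j / ((n : ℝ) + 2 + j) := by
      rw [Finset.mul_sum]
      refine Finset.sum_congr rfl fun j _ => ?_
      push_cast; ring
    have h3 : ∑ k ∈ range (n + 1), a (n + 1) * a k / (((n + 1 : ℕ) : ℝ) + k + 1) =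
        a (n + 1) * ∑ j ∈ range (n + 1), a j / ((n : ℝ) + 2 + j) := by
      rw [Finset.mul_sum]
      refine Finset.sum_congr rfl fun j _ => ?_
      push_cast; ring
    rw [h2, h3, hT n]
    have h4 : (((n + 1 : ℕ) : ℝ) + ((n + 1 : ℕ) : ℝ) + 1) = 2 * (n : ℝ) + 3 := by
      push_cast; ring
    rw [h4]
    have h5 : (2 * (n : ℝ) + 3) ≠ 0 := by positivity
    field_simp
    ring
  refine ⟨part1, ?_⟩
  intro n
  induction n with
  | zero =>
    rw [int_sq]
    simp [ha, hc0]
  | succ n ih =>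
    have := part1 n
    rw [show n + 1 + 1 = n + 2 from rfl] at *
    rw [this, ih, Finset.sum_Icc_succ_top (by omega : 1 ≤ n + 1)]
    push_cast
    ring
end

section
/- For all n ≥ 1, ∑_{k=1}^{n} c_k²/(2k+1) ≤ 1; in particular c_n² ≤ 2n+1 for all n. -/
open Finset intervalIntegral

private def Qsum (c : ℕ → ℚ) (n : ℕ) : ℚ :=
  ∑ j ∈ range (n+1), ∑ k ∈ range (n+1), c j * c k / ((j:ℚ) + (k:ℚ) + 1)

private lemma Qsum_nonneg (c : ℕ → ℚ) (n : ℕ) : 0 ≤ Qsum c n := by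
  have key : ((Qsum c n : ℚ) : ℝ)
      = ∫ x in (0:ℝ)..1, (∑ k ∈ range (n+1), (c k : ℝ) * x ^ k) ^ 2 := by
    have hint : ∀ x : ℝ, (∑ k ∈ range (n+1), (c k : ℝ) * x ^ k) ^ 2
        = ∑ j ∈ range (n+1), ∑ k ∈ range (n+1),
            (c j : ℝ) * (c k : ℝ) * x ^ (j + k) := by
      intro x
      rw [sq, Finset.sum_mul_sum]
      exact Finset.sum_congr rfl fun j _ => Finset.sum_congr rfl fun k _ => by
        rw [pow_add]; ring
    simp only [hint]
    rw [intervalIntegral.integral_finset_sum]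
    · have : ∀ j ∈ range (n+1),
          (∫ x in (0:ℝ)..1, ∑ k ∈ range (n+1), (c j : ℝ) * (c k : ℝ) * x ^ (j+k))
          = ∑ k ∈ range (n+1), (c j : ℝ) * (c k : ℝ) / ((j:ℝ) + (k:ℝ) + 1) := by
        intro j _
        rw [intervalIntegral.integral_finset_sum]
        · refine Finset.sum_congr rfl fun k _ => ?_
          rw [intervalIntegral.integral_const_mul, integral_pow]
          push_cast
          ring
        · intro k _
          exact (Continuous.intervalIntegrable (by continuity) 0 1)
      rw [Finset.sum_congr rfl this]
      simp only [Qsum]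
      push_cast
      rfl
    · intro j _
      exact (Continuous.intervalIntegrable (by continuity) 0 1)
  have h2 : (0:ℝ) ≤ ((Qsum c n : ℚ) : ℝ) := by
    rw [key]
    apply intervalIntegral.integral_nonneg (by norm_num)
    intro x _
    positivity
  exact_mod_cast h2

private lemma Qsum_succ (c : ℕ → ℚ) (n : ℕ)
    (h : ∑ k ∈ Finset.range (n + 2), c k / ((n+1 : ℚ) + 1 + (k : ℚ)) = 0) :
    Qsum c (n+1) = Qsum c n - (c (n+1))^2 / (2*(n:ℚ) + 3) := by
  have hS : ∑ k ∈ range (n+1), c k / ((n+1 : ℚ) + 1 + (k : ℚ))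
      = - c (n+1) / (2*(n:ℚ) + 3) := by
    have := h
    rw [Finset.sum_range_succ] at this
    push_cast at this ⊢
    have hne : (2*(n:ℚ) + 3) ≠ 0 := by positivity
    field_simp at this ⊢
    linarith [this]
  have expand : Qsum c (n+1) = Qsum c n
      + (∑ j ∈ range (n+1), c j * c (n+1) / ((j:ℚ) + ((n:ℚ)+1) + 1))
      + (∑ k ∈ range (n+1), c (n+1) * c k / (((n:ℚ)+1) + (k:ℚ) + 1))
      + c (n+1) * c (n+1) / (((n:ℚ)+1) + ((n:ℚ)+1) + 1) := by
    simp only [Qsum, Finset.sum_range_succ, Finset.sum_add_distrib]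
    push_cast
    ring
  have e1 : (∑ j ∈ range (n+1), c j * c (n+1) / ((j:ℚ) + ((n:ℚ)+1) + 1))
      = c (n+1) * ∑ k ∈ range (n+1), c k / ((n+1 : ℚ) + 1 + (k : ℚ)) := by
    rw [Finset.mul_sum]
    exact Finset.sum_congr rfl fun j _ => by ring
  have e2 : (∑ k ∈ range (n+1), c (n+1) * c k / (((n:ℚ)+1) + (k:ℚ) + 1))
      = c (n+1) * ∑ k ∈ range (n+1), c k / ((n+1 : ℚ) + 1 + (k : ℚ)) := by
    rw [Finset.mul_sum]
    exact Finset.sum_congr rfl fun j _ => by ring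
  rw [expand, e1, e2, hS]
  have hne : (2*(n:ℚ) + 3) ≠ 0 := by positivity
  field_simp
  ring

private lemma Qsum_eq (c : ℕ → ℚ) (hc0 : c 0 = 1)
    (hrec : ∀ n : ℕ, 1 ≤ n →
      ∑ k ∈ Finset.range (n + 1), c k / ((n : ℚ) + 1 + (k : ℚ)) = 0) (n : ℕ) :
    Qsum c n = 1 - ∑ k ∈ Finset.Icc 1 n, (c k) ^ 2 / (2 * (k : ℚ) + 1) := by
  induction n with
  | zero => simp [Qsum, hc0]
  | succ m ih =>
    have h := hrec (m+1) (by omega)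
    push_cast at h
    rw [Qsum_succ c m h, ih]
    rw [show m + 1 = (m+1) by rfl, Finset.sum_Icc_succ_top (by omega)]
    push_cast
    ring

theorem sum_squares_bound (c : ℕ → ℚ)
    (hc0 : c 0 = 1)
    (hrec : ∀ n : ℕ, 1 ≤ n →
      ∑ k ∈ Finset.range (n + 1), c k / ((n : ℚ) + 1 + (k : ℚ)) = 0) :
    (∀ n : ℕ, 1 ≤ n →
      ∑ k ∈ Finset.Icc 1 n, (c k) ^ 2 / (2 * (k : ℚ) + 1) ≤ 1) ∧
    (∀ n : ℕ, (c n) ^ 2 ≤ 2 * (n : ℚ) + 1) := by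
  have hsum : ∀ n : ℕ,
      ∑ k ∈ Finset.Icc 1 n, (c k) ^ 2 / (2 * (k : ℚ) + 1) ≤ 1 := by
    intro n
    have := Qsum_nonneg c n
    rw [Qsum_eq c hc0 hrec n] at this
    linarith
  refine ⟨fun n _ => hsum n, fun n => ?_⟩
  rcases Nat.eq_zero_or_pos n with rfl | hn
  · simp [hc0]
  · have hmem : n ∈ Finset.Icc 1 n := Finset.mem_Icc.mpr ⟨hn, le_refl n⟩
    have hterm : (c n)^2 / (2*(n:ℚ)+1) ≤ ∑ k ∈ Finset.Icc 1 n, (c k)^2 / (2*(k:ℚ)+1) :=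
      Finset.single_le_sum (f := fun k => (c k)^2 / (2*(k:ℚ)+1))
        (fun k _ => by positivity) hmem
    have := (hterm.trans (hsum n))
    have hne : (0:ℚ) < 2*(n:ℚ)+1 := by positivity
    rw [div_le_one hne] at this
    exact this
end

section
/- For all n ≥ 2, |c_n| ≤ √(D(n)) · n^{-3/2}, where D(n) = ∫_0^1 p_n'(x)² dx. -/
lemma cn_intpow01 (m : ℕ) : ∫ x in (0:ℝ)..1, x^m = 1/((m:ℝ)+1) := by
  rw [integral_pow]; simp

lemma cn_term_int (a : ℝ) (k n : ℕ) :
    ∫ x in (0:ℝ)..1, a * k * x^(k-1) * (x^(n+1) - x^n)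
    = a * k * (1/((k:ℝ)+n+1) - 1/((k:ℝ)+n)) := by
  rcases k with _ | j
  · simp
  · have h : ∀ x : ℝ, a * (j+1 : ℕ) * x^((j+1)-1) * (x^(n+1) - x^n)
        = a * (j+1 : ℕ) * x^(j+(n+1)) - a * (j+1 : ℕ) * x^(j+n) := by
      intro x; rw [pow_add, pow_add]; push_cast; ring
    rw [intervalIntegral.integral_congr
        (g := fun x => a * (j+1 : ℕ) * x^(j+(n+1)) - a * (j+1 : ℕ) * x^(j+n)) (fun x _ => h x)]
    rw [intervalIntegral.integral_sub (f := fun x => a * (j+1 : ℕ) * x^(j+(n+1)))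
        (g := fun x => a * (j+1 : ℕ) * x^(j+n))
        ((continuous_const.mul (continuous_pow _)).intervalIntegrable 0 1)
        ((continuous_const.mul (continuous_pow _)).intervalIntegrable 0 1),
      intervalIntegral.integral_const_mul, intervalIntegral.integral_const_mul,
      cn_intpow01, cn_intpow01]
    push_cast
    have h1 : (j:ℝ)+(n+1)+1 ≠ 0 := by positivity
    have h2 : (j:ℝ)+n+1 ≠ 0 := by positivity
    field_simp
    ring

lemma cn_phi2_int (n : ℕ) :
    ∫ x in (0:ℝ)..1, (x^(n+1) - x^n)^2
    = 1/(2*(n:ℝ)+3) - 2/(2*(n:ℝ)+2) + 1/(2*(n:ℝ)+1) := by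
  have h : ∀ x : ℝ, (x^(n+1) - x^n)^2 = x^(2*n+2) - 2*x^(2*n+1) + x^(2*n) := fun x => by ring
  rw [intervalIntegral.integral_congr
      (g := fun x => x^(2*n+2) - 2*x^(2*n+1) + x^(2*n)) (fun x _ => h x)]
  have i1 : IntervalIntegrable (fun x : ℝ => x^(2*n+2)) MeasureTheory.volume 0 1 :=
    (continuous_pow _).intervalIntegrable 0 1
  have i2 : IntervalIntegrable (fun x : ℝ => 2*x^(2*n+1)) MeasureTheory.volume 0 1 :=
    (continuous_const.mul (continuous_pow _)).intervalIntegrable 0 1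
  have i3 : IntervalIntegrable (fun x : ℝ => x^(2*n)) MeasureTheory.volume 0 1 :=
    (continuous_pow _).intervalIntegrable 0 1
  rw [intervalIntegral.integral_add (i1.sub i2) i3, intervalIntegral.integral_sub i1 i2,
    intervalIntegral.integral_const_mul, cn_intpow01, cn_intpow01, cn_intpow01]
  push_cast
  ring

lemma cn_key_rat (c : ℕ → ℚ)
    (hrec : ∀ n : ℕ, 1 ≤ n →
      ∑ k ∈ Finset.range (n + 1), c k / ((n : ℚ) + 1 + (k : ℚ)) = 0)
    (n : ℕ) (hn : 2 ≤ n) :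
    ∑ k ∈ Finset.range (n+1), c k * k * (1/((k:ℚ)+n+1) - 1/((k:ℚ)+n)) = c n / 2 := by
  obtain ⟨m, rfl⟩ : ∃ m, n = m + 2 := ⟨n - 2, by omega⟩
  have h1 := hrec (m+2) (by omega)
  have h2 := hrec (m+1) (by omega)
  have h1' : ∑ k ∈ Finset.range (m+3), c k / ((k:ℚ)+(m+2)+1) = 0 := by
    rw [← h1]
    exact Finset.sum_congr rfl fun k _ => by push_cast; ring_nf
  have h2' : ∑ k ∈ Finset.range (m+3), c k / ((k:ℚ)+(m+2)) = c (m+2) / (2*(m+2)) := by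
    rw [Finset.sum_range_succ]
    have : ∑ k ∈ Finset.range (m+2), c k / ((k:ℚ)+(m+2)) = 0 := by
      rw [← h2]
      exact Finset.sum_congr rfl fun k _ => by push_cast; ring_nf
    rw [this]; push_cast; ring
  have key : ∀ k ∈ Finset.range (m+3),
      c k * k * (1/((k:ℚ)+(m+2)+1) - 1/((k:ℚ)+(m+2)))
      = ((m:ℚ)+2) * (c k / ((k:ℚ)+(m+2))) - ((m:ℚ)+3) * (c k / ((k:ℚ)+(m+2)+1)) := by
    intro k _
    have hk1 : (k:ℚ)+(m+2) ≠ 0 := by positivity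
    have hk2 : (k:ℚ)+(m+2)+1 ≠ 0 := by positivity
    field_simp; ring
  push_cast
  calc ∑ k ∈ Finset.range (m+2+1), c k * k * (1/((k:ℚ)+(m+2)+1) - 1/((k:ℚ)+(m+2)))
      = ∑ k ∈ Finset.range (m+3), (((m:ℚ)+2) * (c k / ((k:ℚ)+(m+2)))
          - ((m:ℚ)+3) * (c k / ((k:ℚ)+(m+2)+1))) := Finset.sum_congr rfl key
    _ = ((m:ℚ)+2) * (∑ k ∈ Finset.range (m+3), c k / ((k:ℚ)+(m+2)))
          - ((m:ℚ)+3) * (∑ k ∈ Finset.range (m+3), c k / ((k:ℚ)+(m+2)+1)) := by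
        rw [Finset.sum_sub_distrib, Finset.mul_sum, Finset.mul_sum]
    _ = c (m+2) / 2 := by rw [h1', h2']; push_cast; field_simp; ring

theorem cn_le_sqrtD (c : ℕ → ℚ)
    (hc0 : c 0 = 1)
    (hrec : ∀ n : ℕ, 1 ≤ n →
      ∑ k ∈ Finset.range (n + 1), c k / ((n : ℚ) + 1 + (k : ℚ)) = 0) :
    ∀ n : ℕ, 2 ≤ n →
      |(c n : ℝ)| ≤
        Real.sqrt (∫ x in (0:ℝ)..1,
            (∑ k ∈ Finset.range (n + 1), (c k : ℝ) * (k : ℝ) * x ^ (k - 1)) ^ 2) *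
          (n : ℝ) ^ (-(3 : ℝ) / 2) := by
  intro n hn
  have hn2 : (2:ℝ) ≤ (n:ℝ) := by exact_mod_cast hn
  have hnpos : (0:ℝ) < n := by linarith
  set f : ℝ → ℝ := fun x => ∑ k ∈ Finset.range (n + 1), (c k : ℝ) * (k : ℝ) * x ^ (k - 1)
    with hf
  have hfc : Continuous f := continuous_finset_sum _ fun k _ =>
    continuous_const.mul (continuous_pow _)
  have hphic : Continuous (fun x : ℝ => x^(n+1) - x^n) :=
    (continuous_pow _).sub (continuous_pow _)
  set D : ℝ := ∫ x in (0:ℝ)..1, f x ^ 2 with hD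
  set I1 : ℝ := ∫ x in (0:ℝ)..1, f x * (x^(n+1) - x^n) with hI1def
  set I2 : ℝ := ∫ x in (0:ℝ)..1, (x^(n+1) - x^n)^2 with hI2def
  -- Step 1: I1 = c n / 2
  have hI1 : I1 = (c n : ℝ) / 2 := by
    have e1 : I1 = ∑ k ∈ Finset.range (n+1),
        ∫ x in (0:ℝ)..1, (c k : ℝ) * k * x^(k-1) * (x^(n+1) - x^n) := by
      rw [hI1def, ← intervalIntegral.integral_finset_sum]
      · apply intervalIntegral.integral_congr
        intro x _
        simp only [hf, Finset.sum_mul]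
      · intro k _
        exact ((continuous_const.mul (continuous_pow _)).mul hphic).intervalIntegrable 0 1
    rw [e1]
    have e2 : ∑ k ∈ Finset.range (n+1),
        (∫ x in (0:ℝ)..1, (c k : ℝ) * k * x^(k-1) * (x^(n+1) - x^n))
        = ∑ k ∈ Finset.range (n+1), (c k : ℝ) * k * (1/((k:ℝ)+n+1) - 1/((k:ℝ)+n)) :=
      Finset.sum_congr rfl fun k _ => cn_term_int _ k n
    rw [e2]
    have hq := cn_key_rat c hrec n hn
    have : ((∑ k ∈ Finset.range (n+1), c k * k * (1/((k:ℚ)+n+1) - 1/((k:ℚ)+n)) : ℚ) : ℝ)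
        = ∑ k ∈ Finset.range (n+1), (c k : ℝ) * k * (1/((k:ℝ)+n+1) - 1/((k:ℝ)+n)) := by
      push_cast
      ring
    rw [← this, hq]
    push_cast
    ring
  -- Step 2: I2 value and bounds
  have hI2 : I2 = 1/(2*(n:ℝ)+3) - 2/(2*(n:ℝ)+2) + 1/(2*(n:ℝ)+1) := cn_phi2_int n
  have hI2' : I2 = 2 / ((2*(n:ℝ)+1) * (2*(n:ℝ)+2) * (2*(n:ℝ)+3)) := by
    rw [hI2]
    have a1 : (2*(n:ℝ)+1) ≠ 0 := by positivity
    have a2 : (2*(n:ℝ)+2) ≠ 0 := by positivity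
    have a3 : (2*(n:ℝ)+3) ≠ 0 := by positivity
    field_simp
    ring
  have hI2pos : 0 < I2 := by rw [hI2']; positivity
  -- Step 3: Cauchy-Schwarz
  have hD0 : 0 ≤ D := by
    rw [hD]
    apply intervalIntegral.integral_nonneg (by norm_num)
    intro x _
    exact sq_nonneg _
  have hCS : I1^2 ≤ D * I2 := by
    set t : ℝ := I1 / I2 with ht
    have hint : ∀ x : ℝ, (f x - t * (x^(n+1) - x^n))^2
        = f x ^ 2 - 2*t*(f x * (x^(n+1) - x^n)) + t^2 * (x^(n+1) - x^n)^2 := fun x => by ring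
    have if2 : IntervalIntegrable (fun x : ℝ => f x ^ 2) MeasureTheory.volume 0 1 :=
      (hfc.pow 2).intervalIntegrable 0 1
    have ifp : IntervalIntegrable (fun x : ℝ => 2*t*(f x * (x^(n+1) - x^n)))
        MeasureTheory.volume 0 1 :=
      (continuous_const.mul (hfc.mul hphic)).intervalIntegrable 0 1
    have ip2 : IntervalIntegrable (fun x : ℝ => t^2 * (x^(n+1) - x^n)^2)
        MeasureTheory.volume 0 1 :=
      (continuous_const.mul (hphic.pow 2)).intervalIntegrable 0 1
    have h0 : 0 ≤ ∫ x in (0:ℝ)..1, (f x - t * (x^(n+1) - x^n))^2 := by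
      apply intervalIntegral.integral_nonneg (by norm_num)
      intro x _
      exact sq_nonneg _
    have hexp : (∫ x in (0:ℝ)..1, (f x - t * (x^(n+1) - x^n))^2)
        = D - 2*t*I1 + t^2*I2 := by
      rw [intervalIntegral.integral_congr (g := fun x =>
        f x ^ 2 - 2*t*(f x * (x^(n+1) - x^n)) + t^2 * (x^(n+1) - x^n)^2) (fun x _ => hint x)]
      rw [intervalIntegral.integral_add (if2.sub ifp) ip2,
        intervalIntegral.integral_sub if2 ifp,
        intervalIntegral.integral_const_mul, intervalIntegral.integral_const_mul]
    rw [hexp] at h0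
    have hfin : D * I2 - I1^2 = (D - 2*t*I1 + t^2*I2) * I2 := by
      rw [ht]
      field_simp
      ring
    nlinarith [mul_nonneg h0 hI2pos.le]
  -- Step 4: conclude
  have habs : |(c n : ℝ)| = 2 * |I1| := by
    rw [hI1]
    rw [abs_div]
    norm_num
    ring
  have hI1le : |I1| ≤ Real.sqrt (D * I2) := by
    rw [← Real.sqrt_sq_eq_abs]
    exact Real.sqrt_le_sqrt hCS
  have h4I2 : 4 * I2 ≤ ((n:ℝ)^3)⁻¹ := by
    rw [hI2', inv_eq_one_div,
      show (4:ℝ) * (2 / ((2*(n:ℝ)+1) * (2*(n:ℝ)+2) * (2*(n:ℝ)+3)))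
        = 8 / ((2*(n:ℝ)+1) * (2*(n:ℝ)+2) * (2*(n:ℝ)+3)) from by ring,
      div_le_div_iff₀ (by positivity) (by positivity)]
    nlinarith [hnpos, hn2]
  have hsqrt4 : Real.sqrt 4 = 2 := by
    rw [show (4:ℝ) = 2^2 from by norm_num, Real.sqrt_sq (by norm_num : (0:ℝ) ≤ 2)]
  have hrpow : Real.sqrt (((n:ℝ)^3)⁻¹) = (n:ℝ) ^ (-(3:ℝ)/2) := by
    have e : ((n:ℝ)^3)⁻¹ = (n:ℝ) ^ (-(3:ℝ)) := by
      rw [← Real.rpow_natCast (n:ℝ) 3, ← Real.rpow_neg hnpos.le]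
      norm_num
    rw [e, Real.sqrt_eq_rpow, ← Real.rpow_mul hnpos.le]
    norm_num
  have hstep : 2 * Real.sqrt (D * I2) ≤ Real.sqrt D * (n:ℝ) ^ (-(3:ℝ)/2) := by
    have e1 : 2 * Real.sqrt (D * I2) = Real.sqrt (4 * (D * I2)) := by
      rw [Real.sqrt_mul (by norm_num : (0:ℝ) ≤ 4), hsqrt4]
    have e2 : 4 * (D * I2) ≤ D * ((n:ℝ)^3)⁻¹ := by
      calc 4 * (D * I2) = D * (4 * I2) := by ring
        _ ≤ D * ((n:ℝ)^3)⁻¹ := mul_le_mul_of_nonneg_left h4I2 hD0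
    calc 2 * Real.sqrt (D * I2) = Real.sqrt (4 * (D * I2)) := e1
      _ ≤ Real.sqrt (D * ((n:ℝ)^3)⁻¹) := Real.sqrt_le_sqrt e2
      _ = Real.sqrt D * Real.sqrt (((n:ℝ)^3)⁻¹) := Real.sqrt_mul hD0 _
      _ = Real.sqrt D * (n:ℝ) ^ (-(3:ℝ)/2) := by rw [hrpow]
  calc |(c n : ℝ)| = 2 * |I1| := habs
    _ ≤ 2 * Real.sqrt (D * I2) := by linarith
    _ ≤ Real.sqrt D * (n:ℝ) ^ (-(3:ℝ)/2) := hstep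
end

section
/- For all n ≥ 1, ∫_0^1 p_n'(x) x^{n+1} dx = s_n, where s_n = c_0 + c_1 + ... + c_n. -/
theorem integral_deriv_eq_partial_sum (c : ℕ → ℚ)
    (hc0 : c 0 = 1)
    (hrec : ∀ n : ℕ, 1 ≤ n →
      ∑ k ∈ Finset.range (n + 1), c k / ((n : ℚ) + 1 + (k : ℚ)) = 0) :
    ∀ n : ℕ, 1 ≤ n →
      (∫ x in (0:ℝ)..1,
        (∑ k ∈ Finset.range (n + 1), (c k : ℝ) * (k : ℝ) * x ^ (k - 1)) *
          x ^ (n + 1)) = ∑ k ∈ Finset.range (n + 1), (c k : ℝ) := by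
  intro n hn
  have hI : (∫ x in (0:ℝ)..1,
      (∑ k ∈ Finset.range (n + 1), (c k : ℝ) * (k : ℝ) * x ^ (k - 1)) * x ^ (n + 1))
      = ∑ k ∈ Finset.range (n + 1),
          (c k : ℝ) * (k : ℝ) / (((k - 1 + (n + 1) : ℕ) : ℝ) + 1) := by
    have hfun : ∀ x : ℝ,
        (∑ k ∈ Finset.range (n + 1), (c k : ℝ) * (k : ℝ) * x ^ (k - 1)) * x ^ (n + 1)
        = ∑ k ∈ Finset.range (n + 1), (c k : ℝ) * (k : ℝ) * x ^ (k - 1 + (n + 1)) := by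
      intro x
      rw [Finset.sum_mul]
      exact Finset.sum_congr rfl fun k _ => by rw [pow_add]; ring
    simp only [hfun]
    rw [intervalIntegral.integral_finset_sum]
    · refine Finset.sum_congr rfl fun k _ => ?_
      rw [intervalIntegral.integral_const_mul, integral_pow]
      norm_num [div_eq_mul_inv, mul_assoc]
    · intro k _
      exact (Continuous.intervalIntegrable (by continuity) 0 1)
  rw [hI]
  have h0 : ∑ k ∈ Finset.range (n + 1), (c k : ℝ) / ((n : ℝ) + 1 + (k : ℝ)) = 0 := by
    exact_mod_cast hrec n hn
  have hbridge : ∑ k ∈ Finset.range (n + 1),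
      (c k : ℝ) * (k : ℝ) / (((k - 1 + (n + 1) : ℕ) : ℝ) + 1)
      = ∑ k ∈ Finset.range (n + 1), (c k : ℝ) * (k : ℝ) / ((n : ℝ) + 1 + (k : ℝ)) := by
    refine Finset.sum_congr rfl fun k _ => ?_
    match k with
    | 0 => simp
    | j + 1 =>
      have : (j + 1 - 1 + (n + 1) : ℕ) = j + n + 1 := by omega
      rw [this]
      push_cast
      ring_nf
  rw [hbridge]
  have hterm : ∀ k ∈ Finset.range (n + 1),
      (c k : ℝ) * (k : ℝ) / ((n : ℝ) + 1 + (k : ℝ))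
      = (c k : ℝ) - ((n : ℝ) + 1) * ((c k : ℝ) / ((n : ℝ) + 1 + (k : ℝ))) := by
    intro k _
    have hne : ((n : ℝ) + 1 + (k : ℝ)) ≠ 0 := by positivity
    field_simp
    ring
  rw [Finset.sum_congr rfl hterm, Finset.sum_sub_distrib, ← Finset.mul_sum, h0, mul_zero,
    sub_zero]
end

section
/- For all n ≥ 1, s_n² ≤ D(n)/(2n+3), where s_n = ∑_{k=0}^n c_k and D(n) = ∫_0^1 p_n'(x)² dx. -/
open intervalIntegral Finset

theorem partial_sum_sq_le (c : ℕ → ℚ)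
    (hc0 : c 0 = 1)
    (hrec : ∀ n : ℕ, 1 ≤ n →
      ∑ k ∈ Finset.range (n + 1), c k / ((n : ℚ) + 1 + (k : ℚ)) = 0) :
    ∀ n : ℕ, 1 ≤ n →
      (∑ k ∈ Finset.range (n + 1), (c k : ℝ)) ^ 2 ≤
        (∫ x in (0:ℝ)..1,
          (∑ k ∈ Finset.range (n + 1), (c k : ℝ) * (k : ℝ) * x ^ (k - 1)) ^ 2) /
          (2 * (n : ℝ) + 3) := by
  intro n hn
  set g : ℝ → ℝ := fun x => ∑ k ∈ Finset.range (n + 1), (c k : ℝ) * (k : ℝ) * x ^ (k - 1)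
    with hgdef
  have hgc : Continuous g := by
    apply continuous_finset_sum
    intro k _
    fun_prop
  set s : ℝ := ∑ k ∈ Finset.range (n + 1), (c k : ℝ) with hsdef
  -- rational identity
  have hden : ∀ k : ℕ, ((n : ℚ) + 1 + (k : ℚ)) ≠ 0 := by
    intro k; positivity
  have hQ : (∑ k ∈ Finset.range (n + 1), c k * k / ((n : ℚ) + 1 + k))
      = ∑ k ∈ Finset.range (n + 1), c k := by
    have h0 := hrec n hn
    have hcongr : ∀ k ∈ Finset.range (n + 1),
        c k * k / ((n : ℚ) + 1 + k)
          = c k - ((n : ℚ) + 1) * (c k / ((n : ℚ) + 1 + k)) := by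
      intro k _
      field_simp
      ring
    rw [Finset.sum_congr rfl hcongr, Finset.sum_sub_distrib, ← Finset.mul_sum, h0]
    ring
  -- integral of x^(n+1) * g x
  have hterm : ∀ k : ℕ, (∫ x in (0:ℝ)..1, x ^ (n + 1) * ((c k : ℝ) * k * x ^ (k - 1)))
      = (c k : ℝ) * k / ((n : ℝ) + 1 + k) := by
    intro k
    cases k with
    | zero => simp
    | succ m =>
      push_cast
      have hx : ∀ x : ℝ, x ^ (n + 1) * ((c (m+1) : ℝ) * ((m:ℝ)+1) * x ^ m)
          = (c (m+1) : ℝ) * ((m:ℝ)+1) * x ^ (n + 1 + m) := by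
        intro x
        ring
      rw [intervalIntegral.integral_congr (fun x _ => hx x)]
      rw [intervalIntegral.integral_const_mul, integral_pow]
      push_cast
      ring
  have hB : (∫ x in (0:ℝ)..1, x ^ (n + 1) * g x) = s := by
    have hint : ∀ k ∈ Finset.range (n + 1), IntervalIntegrable
        (fun x => x ^ (n + 1) * ((c k : ℝ) * k * x ^ (k - 1))) MeasureTheory.volume 0 1 := by
      intro k _
      apply Continuous.intervalIntegrable
      fun_prop
    have : (∫ x in (0:ℝ)..1, x ^ (n + 1) * g x)
        = ∑ k ∈ Finset.range (n + 1),
            ∫ x in (0:ℝ)..1, x ^ (n + 1) * ((c k : ℝ) * k * x ^ (k - 1)) := by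
      rw [hgdef]
      rw [← intervalIntegral.integral_finset_sum hint]
      congr 1
      ext x
      rw [Finset.mul_sum]
    rw [this]
    have : ∑ k ∈ Finset.range (n + 1), (c k : ℝ) * k / ((n : ℝ) + 1 + k)
        = ∑ k ∈ Finset.range (n + 1), (c k : ℝ) := by
      have := congrArg (fun q : ℚ => (q : ℝ)) hQ
      push_cast at this
      convert this using 2 <;> push_cast <;> ring
    rw [Finset.sum_congr rfl (fun k _ => hterm k), this, hsdef]
  -- integrability facts
  have hIg2 : IntervalIntegrable (fun x => g x ^ 2) MeasureTheory.volume 0 1 :=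
    (hgc.pow 2).intervalIntegrable 0 1
  have hIfg : IntervalIntegrable (fun x : ℝ => x ^ (n + 1) * g x) MeasureTheory.volume 0 1 := by
    apply Continuous.intervalIntegrable; fun_prop
  have hIf2 : IntervalIntegrable (fun x : ℝ => x ^ (2 * n + 2)) MeasureTheory.volume 0 1 := by
    apply Continuous.intervalIntegrable; fun_prop
  set lam : ℝ := (2 * (n : ℝ) + 3) * s with hlam
  have key : 0 ≤ ∫ x in (0:ℝ)..1, (g x - lam * x ^ (n + 1)) ^ 2 := by
    apply intervalIntegral.integral_nonneg (by norm_num)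
    intro x _
    positivity
  have hexp : (∫ x in (0:ℝ)..1, (g x - lam * x ^ (n + 1)) ^ 2)
      = (∫ x in (0:ℝ)..1, g x ^ 2) - 2 * lam * s + lam ^ 2 / (2 * (n : ℝ) + 3) := by
    have hpt : ∀ x : ℝ, (g x - lam * x ^ (n + 1)) ^ 2
        = g x ^ 2 - 2 * lam * (x ^ (n + 1) * g x) + lam ^ 2 * x ^ (2 * n + 2) := by
      intro x; ring
    rw [intervalIntegral.integral_congr (fun x _ => hpt x)]
    rw [intervalIntegral.integral_add ((hIg2.sub (hIfg.const_mul _))) (hIf2.const_mul _),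
        intervalIntegral.integral_sub hIg2 (hIfg.const_mul _),
        intervalIntegral.integral_const_mul, intervalIntegral.integral_const_mul,
        hB, integral_pow]
    push_cast
    ring
  have hpos : (0:ℝ) < 2 * (n : ℝ) + 3 := by positivity
  rw [le_div_iff₀ hpos]
  have : (∫ x in (0:ℝ)..1, g x ^ 2) - (2 * (n : ℝ) + 3) * s ^ 2 ≥ 0 := by
    have := key
    rw [hexp] at this
    have h2 : 2 * lam * s = 2 * (2 * (n : ℝ) + 3) * s ^ 2 := by rw [hlam]; ring
    have h3 : lam ^ 2 / (2 * (n : ℝ) + 3) = (2 * (n : ℝ) + 3) * s ^ 2 := by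
      rw [hlam]; field_simp
    linarith [this, h2.le, h3.le]
  linarith [this]
end

section
/- For every n ≥ 1, D(n) ≤ n s_n² + (n+1) c_n²/2 + ∑_{k=0}^{n−1} (k+1) c_k². -/
open Finset intervalIntegral

lemma integral_sq' (n : ℕ) (a : ℕ → ℝ) :
    ∫ x in (0:ℝ)..1, (∑ k ∈ range n, a k * x ^ k) ^ 2
      = ∑ j ∈ range n, ∑ k ∈ range n, a j * a k / ((j:ℝ) + k + 1) := by
  have h1 : ∀ x : ℝ, (∑ k ∈ range n, a k * x ^ k) ^ 2
      = ∑ j ∈ range n, ∑ k ∈ range n, a j * a k * x ^ (j + k) := by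
    intro x
    rw [sq, Finset.sum_mul_sum]
    exact Finset.sum_congr rfl fun j _ => Finset.sum_congr rfl fun k _ => by
      rw [pow_add]; ring
  simp_rw [h1]
  rw [intervalIntegral.integral_finset_sum]
  · refine Finset.sum_congr rfl fun j _ => ?_
    rw [intervalIntegral.integral_finset_sum]
    · refine Finset.sum_congr rfl fun k _ => ?_
      rw [intervalIntegral.integral_const_mul, integral_pow]
      push_cast
      ring
    · intro k _
      exact ((continuous_const.mul (continuous_pow _)).intervalIntegrable _ _)
  · intro j _
    exact ((continuous_finset_sum _ fun k _ =>
      (continuous_const.mul (continuous_pow _))).intervalIntegrable _ _)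

noncomputable def Qs (c : ℕ → ℚ) (n : ℕ) : ℚ :=
  ∑ j ∈ range n, ∑ k ∈ range n,
    ((j:ℚ) + 1) * ((k:ℚ) + 1) * c (j + 1) * c (k + 1) / ((j:ℚ) + (k:ℚ) + 1)

noncomputable def Rs (c : ℕ → ℚ) (n : ℕ) : ℚ :=
  (n:ℚ) * (∑ k ∈ range (n + 1), c k) ^ 2 + ((n:ℚ) + 1) * (c n) ^ 2 / 2
    + ∑ k ∈ range n, ((k:ℚ) + 1) * (c k) ^ 2

lemma Qsplit (c : ℕ → ℚ) (n : ℕ) :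
    Qs c (n + 1) = Qs c n
      + 2 * ((n:ℚ) + 1) * c (n + 1)
          * (∑ k ∈ range n, ((k:ℚ) + 1) * c (k + 1) / ((n:ℚ) + (k:ℚ) + 1))
      + ((n:ℚ) + 1) ^ 2 * c (n + 1) ^ 2 / (2 * (n:ℚ) + 1) := by
  unfold Qs
  rw [Finset.sum_range_succ]
  have hinner : ∀ j ∈ range n,
      ∑ k ∈ range (n+1), ((j:ℚ) + 1) * ((k:ℚ) + 1) * c (j + 1) * c (k + 1) / ((j:ℚ) + (k:ℚ) + 1)
      = (∑ k ∈ range n, ((j:ℚ) + 1) * ((k:ℚ) + 1) * c (j + 1) * c (k + 1) / ((j:ℚ) + (k:ℚ) + 1))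
        + ((j:ℚ) + 1) * ((n:ℚ) + 1) * c (j + 1) * c (n + 1) / ((j:ℚ) + (n:ℚ) + 1) := by
    intro j _
    rw [Finset.sum_range_succ]
  rw [Finset.sum_congr rfl hinner, Finset.sum_add_distrib, Finset.sum_range_succ, Finset.mul_sum]
  have h1 : ∑ j ∈ range n, ((j:ℚ) + 1) * ((n:ℚ) + 1) * c (j + 1) * c (n + 1) / ((j:ℚ) + (n:ℚ) + 1)
      = ∑ k ∈ range n, ((n:ℚ) + 1) * ((k:ℚ) + 1) * c (n + 1) * c (k + 1) / ((n:ℚ) + (k:ℚ) + 1) := by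
    refine Finset.sum_congr rfl fun j _ => ?_
    ring_nf
  have h2 : ∀ k ∈ range n,
      ((n:ℚ) + 1) * ((k:ℚ) + 1) * c (n + 1) * c (k + 1) / ((n:ℚ) + (k:ℚ) + 1)
      = (2 * ((n:ℚ) + 1) * c (n + 1)) * (((k:ℚ) + 1) * c (k + 1) / ((n:ℚ) + (k:ℚ) + 1)) / 2 := by
    intro k _; ring
  have h3 : ((n:ℚ) + 1) * ((n:ℚ) + 1) * c (n + 1) * c (n + 1) / ((n:ℚ) + (n:ℚ) + 1)
      = ((n:ℚ) + 1) ^ 2 * c (n + 1) ^ 2 / (2 * (n:ℚ) + 1) := by ring_nf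
  rw [h1, h3]
  rw [Finset.sum_congr rfl h2]
  rw [← Finset.sum_div, ← Finset.mul_sum]
  ring

lemma Slem (c : ℕ → ℚ)
    (hrec : ∀ n : ℕ, 1 ≤ n →
      ∑ k ∈ Finset.range (n + 1), c k / ((n : ℚ) + 1 + (k : ℚ)) = 0)
    (m : ℕ) (hm : 1 ≤ m) :
    ∑ k ∈ range (m + 1), ((k:ℚ) + 1) * c (k + 1) / ((m:ℚ) + 1 + (k:ℚ) + 1)
      = (∑ k ∈ range (m + 2), c k) - c (m + 1) / 2 := by
  have hT := hrec m hm
  have hS : ∑ k ∈ range (m + 1), ((k:ℚ) + 1) * c (k + 1) / ((m:ℚ) + 1 + (k:ℚ) + 1)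
      = ∑ j ∈ range (m + 2), (j:ℚ) * c j / ((m:ℚ) + 1 + (j:ℚ)) := by
    rw [Finset.sum_range_succ' (fun j => (j:ℚ) * c j / ((m:ℚ) + 1 + (j:ℚ))) (m+1)]
    simp only [Nat.cast_zero, zero_mul, zero_div, add_zero]
    refine Finset.sum_congr rfl fun k _ => ?_
    push_cast
    ring_nf
  have hT2 : ∑ j ∈ range (m + 2), c j / ((m:ℚ) + 1 + (j:ℚ))
      = c (m + 1) / (2 * (m:ℚ) + 2) := by
    rw [Finset.sum_range_succ]
    have : ∑ k ∈ range (m + 1), c k / ((m:ℚ) + 1 + (k:ℚ)) = 0 := hT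
    rw [this]
    push_cast
    ring_nf
  have hkey : ∀ j ∈ range (m + 2),
      (j:ℚ) * c j / ((m:ℚ) + 1 + (j:ℚ))
        = c j - ((m:ℚ) + 1) * (c j / ((m:ℚ) + 1 + (j:ℚ))) := by
    intro j _
    have hne : ((m:ℚ) + 1 + (j:ℚ)) ≠ 0 := by positivity
    field_simp
    ring
  rw [hS, Finset.sum_congr rfl hkey, Finset.sum_sub_distrib, ← Finset.mul_sum, hT2]
  have hne : ((m:ℚ) + 1) ≠ 0 := by positivity
  field_simp

lemma Slem' (c : ℕ → ℚ)
    (hrec : ∀ n : ℕ, 1 ≤ n →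
      ∑ k ∈ Finset.range (n + 1), c k / ((n : ℚ) + 1 + (k : ℚ)) = 0)
    (n : ℕ) (hn : 2 ≤ n) :
    ∑ k ∈ range n, ((k:ℚ) + 1) * c (k + 1) / ((n:ℚ) + (k:ℚ) + 1)
      = (∑ k ∈ range (n + 1), c k) - c n / 2 := by
  obtain ⟨m, rfl⟩ : ∃ m, n = m + 1 := ⟨n - 1, by omega⟩
  have hm : 1 ≤ m := by omega
  have h := Slem c hrec m hm
  have hcast : ∀ k : ℕ, (((m+1:ℕ)):ℚ) + (k:ℚ) + 1 = (m:ℚ) + 1 + (k:ℚ) + 1 := by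
    intro k; push_cast; ring
  simp_rw [hcast]
  exact h

lemma qmain (c : ℕ → ℚ)
    (hc0 : c 0 = 1)
    (hrec : ∀ n : ℕ, 1 ≤ n →
      ∑ k ∈ Finset.range (n + 1), c k / ((n : ℚ) + 1 + (k : ℚ)) = 0) :
    ∀ n : ℕ, 1 ≤ n → Qs c n ≤ Rs c n := by
  have hc1 : c 1 = -3/2 := by
    have h := hrec 1 le_rfl
    simp [Finset.sum_range_succ, hc0] at h
    norm_num at h
    linarith
  have hc2 : c 2 = 5/24 := by
    have h := hrec 2 (by norm_num)
    simp [Finset.sum_range_succ, hc0, hc1] at h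
    norm_num at h
    linarith
  have h2 : ∀ n : ℕ, 2 ≤ n → Qs c n ≤ Rs c n := by
    intro n hn
    induction n, hn using Nat.le_induction with
    | base =>
      simp [Qs, Rs, Finset.sum_range_succ, hc0, hc1, hc2]
      norm_num
    | succ n hn ih =>
      rw [Qsplit, Slem' c hrec n hn]
      set s := ∑ k ∈ range (n + 1), c k with hs
      set a := c (n + 1) with ha
      set b := c n with hb
      set ν := (n:ℚ) with hν
      have hRs : Rs c (n + 1) = (ν + 1) * (s + a) ^ 2 + (ν + 2) * a ^ 2 / 2
          + (∑ k ∈ range n, ((k:ℚ) + 1) * (c k) ^ 2 + (ν + 1) * b ^ 2) := by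
        unfold Rs
        rw [Finset.sum_range_succ (fun k => c k) (n+1), Finset.sum_range_succ
          (fun k => ((k:ℚ) + 1) * (c k) ^ 2) n]
        push_cast
        ring
      have hRsn : Rs c n = ν * s ^ 2 + (ν + 1) * b ^ 2 / 2
          + ∑ k ∈ range n, ((k:ℚ) + 1) * (c k) ^ 2 := by
        unfold Rs; ring
      rw [hRs]
      have hνnn : (0:ℚ) ≤ ν := by positivity
      have key : (ν + 1) * (s + a) ^ 2 - ν * s ^ 2 + (ν + 2) * a ^ 2 / 2 + (ν + 1) * b ^ 2 / 2
          - (2 * (ν + 1) * a * (s - b / 2) + (ν + 1) ^ 2 * a ^ 2 / (2 * ν + 1))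
          = (2 * (2 * ν + 1) * s ^ 2 + (2 * (ν + 1) ^ 2 - 1) * a ^ 2
              + (ν + 1) * (2 * ν + 1) * (a + b) ^ 2) / (2 * (2 * ν + 1)) := by
        have hne : (2 * ν + 1) ≠ 0 := by positivity
        field_simp
        ring
      have hnn : (0:ℚ) ≤ (2 * (2 * ν + 1) * s ^ 2 + (2 * (ν + 1) ^ 2 - 1) * a ^ 2
          + (ν + 1) * (2 * ν + 1) * (a + b) ^ 2) / (2 * (2 * ν + 1)) := by
        have h1 : (0:ℚ) ≤ 2 * (ν + 1) ^ 2 - 1 := by nlinarith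
        positivity
      rw [hRsn] at ih
      linarith
  intro n hn
  rcases eq_or_lt_of_le hn with h | h
  · subst_eqs
    simp_all [Qs, Rs, Finset.sum_range_succ, hc0, hc1]
    norm_num
  · exact h2 n h

theorem D_upper_bound (c : ℕ → ℚ)
    (hc0 : c 0 = 1)
    (hrec : ∀ n : ℕ, 1 ≤ n →
      ∑ k ∈ Finset.range (n + 1), c k / ((n : ℚ) + 1 + (k : ℚ)) = 0) :
    ∀ n : ℕ, 1 ≤ n →
      (∫ x in (0:ℝ)..1,
        (∑ k ∈ Finset.range (n + 1), (c k : ℝ) * (k : ℝ) * x ^ (k - 1)) ^ 2) ≤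
      (n : ℝ) * (∑ k ∈ Finset.range (n + 1), (c k : ℝ)) ^ 2 +
        ((n : ℝ) + 1) * (c n : ℝ) ^ 2 / 2 +
        ∑ k ∈ Finset.range n, ((k : ℝ) + 1) * (c k : ℝ) ^ 2 := by
  intro n hn
  have hint : ∀ x : ℝ,
      (∑ k ∈ Finset.range (n + 1), (c k : ℝ) * (k : ℝ) * x ^ (k - 1))
        = ∑ j ∈ range n, ((c (j + 1) : ℝ) * ((j:ℝ) + 1)) * x ^ j := by
    intro x
    rw [Finset.sum_range_succ' (fun k => (c k : ℝ) * (k : ℝ) * x ^ (k - 1)) n]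
    simp only [Nat.cast_zero, mul_zero, zero_mul, add_zero, Nat.add_sub_cancel]
    refine Finset.sum_congr rfl fun j _ => ?_
    push_cast
    ring
  simp_rw [hint]
  rw [integral_sq' n (fun j => (c (j + 1) : ℝ) * ((j:ℝ) + 1))]
  have hQ : ∑ j ∈ range n, ∑ k ∈ range n,
      ((c (j + 1) : ℝ) * ((j:ℝ) + 1)) * ((c (k + 1) : ℝ) * ((k:ℝ) + 1)) / ((j:ℝ) + k + 1)
      = ((Qs c n : ℚ) : ℝ) := by
    unfold Qs
    push_cast
    refine Finset.sum_congr rfl fun j _ => Finset.sum_congr rfl fun k _ => by ring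
  have hR : (n : ℝ) * (∑ k ∈ Finset.range (n + 1), (c k : ℝ)) ^ 2 +
        ((n : ℝ) + 1) * (c n : ℝ) ^ 2 / 2 +
        ∑ k ∈ Finset.range n, ((k : ℝ) + 1) * (c k : ℝ) ^ 2 = ((Rs c n : ℚ) : ℝ) := by
    unfold Rs
    push_cast
    ring
  rw [hQ, hR]
  exact_mod_cast qmain c hc0 hrec n hn
end

section
/- For every n ≥ 1, c_n = (−1)^n (2n+1)!! det(A_n), where A_n is the n×n matrix with (A_n)_{ij} = 1/(i+j) if j ≤ i+1 and 0 otherwise. -/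
open Finset Matrix

/-- The lower Hessenberg matrix with entries `1/(i+j+2)` (0-indexed),
i.e. `1/(i+j)` in 1-indexed form. -/
def Amat (m : ℕ) : Matrix (Fin m) (Fin m) ℚ :=
  fun i j => if (j : ℕ) ≤ (i : ℕ) + 1 then 1 / ((i : ℚ) + (j : ℚ) + 2) else 0

/-- Same as `Amat (m+1)` but with the last row replaced by `r`. -/
def Bmat (m : ℕ) (r : ℕ → ℚ) : Matrix (Fin (m+1)) (Fin (m+1)) ℚ :=
  fun i j => if (i : ℕ) = m then r (j : ℕ)
    else if (j : ℕ) ≤ (i : ℕ) + 1 then 1 / ((i : ℚ) + (j : ℚ) + 2) else 0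

/-- The double factorial product `1·3·5⋯(2k+1)`. -/
def Pp (k : ℕ) : ℚ := ∏ i ∈ range (k+1), (2 * (i : ℚ) + 1)

/-- The claimed formula for `c`. -/
def bseq (k : ℕ) : ℚ := (-1)^k * Pp k * (Amat k).det

lemma A_eq_B (m : ℕ) :
    Amat (m+1) = Bmat m (fun j => 1 / ((m : ℚ) + (j : ℚ) + 2)) := by
  funext i j
  by_cases hi : (i : ℕ) = m
  · have hj : (j : ℕ) ≤ m + 1 := Nat.le_succ_of_le (Nat.lt_succ_iff.mp j.isLt)
    simp [Amat, Bmat, hi, hj]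
  · simp [Amat, Bmat, hi]

lemma P_Ico (k m : ℕ) (h : k ≤ m) :
    Pp k * ∏ l ∈ Ico k m, (2*(l:ℚ)+3) = Pp m := by
  induction m with
  | zero => interval_cases k; simp
  | succ m ih =>
    rcases Nat.lt_or_ge k (m+1) with hk | hk
    · have hk' : k ≤ m := Nat.lt_succ_iff.mp hk
      have hP : Pp (m+1) = Pp m * (2*(m:ℚ)+3) := by
        rw [Pp, Pp, Finset.prod_range_succ]; push_cast; ring
      rw [Finset.prod_Ico_succ_top hk', ← mul_assoc, ih hk', hP]
    · have : k = m + 1 := le_antisymm h hk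
      subst this; simp

/-- Cofactor expansion of `det (Bmat (m+1) r)` along the last column,
which has only two nonzero entries. -/
lemma detB_succ (m : ℕ) (r : ℕ → ℚ) :
    (Bmat (m+1) r).det =
      (Amat (m+1)).det * r (m+1) - (1 / (2*(m:ℚ)+3)) * (Bmat m r).det := by
  have hA : (Bmat (m+1) r).submatrix (Fin.last (m+1)).succAbove
      (Fin.last (m+1)).succAbove = Amat (m+1) := by
    funext i j
    have hi : (i : ℕ) ≠ m + 1 := Nat.ne_of_lt i.isLt
    simp [Matrix.submatrix_apply, Fin.succAbove_last, Bmat, Amat, hi]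
  have hB : (Bmat (m+1) r).submatrix (Fin.castSucc (Fin.last m)).succAbove
      (Fin.last (m+1)).succAbove = Bmat m r := by
    funext i j
    rcases Nat.lt_or_ge (i : ℕ) m with hi | hi
    · have h1 : (Fin.last m).castSucc.succAbove i = i.castSucc :=
        Fin.succAbove_castSucc_of_lt _ _ (by simpa [Fin.lt_def] using hi)
      have hi' : (i : ℕ) ≠ m + 1 := by omega
      have hi'' : (i : ℕ) ≠ m := by omega
      simp [Matrix.submatrix_apply, h1, Fin.succAbove_last, Bmat, hi', hi'']
    · have him : (i : ℕ) = m := le_antisymm (Nat.lt_succ_iff.mp i.isLt) hi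
      have h1 : (Fin.last m).castSucc.succAbove i = i.succ :=
        Fin.succAbove_castSucc_of_le _ _ (by simp [Fin.le_def, him])
      have h2 : ((i.succ : Fin (m+2)) : ℕ) = m + 1 := by simp [him]
      simp [Matrix.submatrix_apply, h1, Fin.succAbove_last, Bmat, h2, him]
  rw [Matrix.det_succ_column (Bmat (m+1) r) (Fin.last (m+1)),
    Fin.sum_univ_castSucc, Fin.sum_univ_castSucc]
  have h0 : ∀ i : Fin m,
      (-1:ℚ) ^ ((Fin.castSucc (Fin.castSucc i) : ℕ) + (Fin.last (m+1) : ℕ)) *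
        Bmat (m+1) r (Fin.castSucc (Fin.castSucc i)) (Fin.last (m+1)) *
        det ((Bmat (m+1) r).submatrix (Fin.castSucc (Fin.castSucc i)).succAbove
          (Fin.last (m+1)).succAbove) = 0 := by
    intro i
    have hi1 : (i : ℕ) ≠ m + 1 := by omega
    have hi2 : ¬ ((m + 1 : ℕ) ≤ (i : ℕ) + 1) := by omega
    simp [Bmat, hi1, hi2]
  rw [Finset.sum_eq_zero (fun i _ => h0 i), hA, hB]
  have e1 : Bmat (m+1) r (Fin.last (m+1)) (Fin.last (m+1)) = r (m+1) := by
    simp [Bmat]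
  have e2 : Bmat (m+1) r (Fin.castSucc (Fin.last m)) (Fin.last (m+1)) =
      1 / (2*(m:ℚ)+3) := by
    have : ((m:ℚ) + ((m:ℚ)+1) + 2) = 2*(m:ℚ)+3 := by ring
    simp [Bmat, Nat.ne_of_lt (Nat.lt_succ_self m), this]
  rw [e1, e2]
  have s1 : (-1:ℚ) ^ ((Fin.last (m+1) : ℕ) + (Fin.last (m+1) : ℕ)) = 1 := by
    simp [← two_mul, pow_mul]
  have s2 : (-1:ℚ) ^ ((Fin.castSucc (Fin.last m) : ℕ) + (Fin.last (m+1) : ℕ)) = -1 := by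
    simp only [Fin.coe_castSucc, Fin.val_last]
    rw [show m + (m+1) = 2*m+1 by ring, pow_succ, pow_mul]
    simp
  rw [s1, s2]
  ring

/-- The full Hessenberg expansion of `det (Bmat m r)` along the last row. -/
lemma detB_formula (m : ℕ) (r : ℕ → ℚ) :
    (Bmat m r).det = ∑ k ∈ range (m+1),
      (-1:ℚ)^(m+k) * r k * (∏ l ∈ Ico k m, (2*(l:ℚ)+3))⁻¹ * (Amat k).det := by
  induction m generalizing r with
  | zero => simp [Bmat]
  | succ m ih =>
    rw [detB_succ, ih]
    conv_rhs => rw [Finset.sum_range_succ]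
    have hlast : (-1:ℚ)^(m+1+(m+1)) * r (m+1) *
        (∏ l ∈ Ico (m+1) (m+1), (2*(l:ℚ)+3))⁻¹ * (Amat (m+1)).det
        = (Amat (m+1)).det * r (m+1) := by
      rw [show m+1+(m+1) = 2*(m+1) by ring, pow_mul]
      simp; ring
    rw [hlast, Finset.mul_sum, sub_eq_add_neg, add_comm, ← Finset.sum_neg_distrib]
    congr 1
    refine Finset.sum_congr rfl fun k hk => ?_
    have hk' : k ≤ m := Nat.lt_succ_iff.mp (Finset.mem_range.mp hk)
    rw [Finset.prod_Ico_succ_top hk', show m+1+k = (m+k)+1 by ring, pow_succ, mul_inv]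
    ring

/-- The sequence `bseq` satisfies the same recurrence as `c`. -/
lemma brec (n : ℕ) :
    ∑ k ∈ range (n+2), bseq k / ((n:ℚ) + 2 + (k:ℚ)) = 0 := by
  rw [Finset.sum_range_succ]
  have hAn : (Amat (n+1)).det = ∑ k ∈ range (n+1),
      (-1:ℚ)^(n+k) * (1 / ((n:ℚ) + (k:ℚ) + 2)) *
        (∏ l ∈ Ico k n, (2*(l:ℚ)+3))⁻¹ * (Amat k).det := by
    rw [A_eq_B, detB_formula]
  have hb : bseq (n+1) = (-1)^(n+1) * Pp (n+1) * (Amat (n+1)).det := rfl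
  rw [hb, hAn, Finset.mul_sum, Finset.sum_div, ← Finset.sum_add_distrib]
  apply Finset.sum_eq_zero
  intro k hk
  have hk' : k ≤ n := Nat.lt_succ_iff.mp (Finset.mem_range.mp hk)
  have hP : Pp k * ∏ l ∈ Ico k n, (2*(l:ℚ)+3) = Pp n := P_Ico k n hk'
  have hPn : Pp (n+1) = Pp n * (2*(n:ℚ)+3) := by
    rw [Pp, Pp, Finset.prod_range_succ]; push_cast; ring
  have hne : (∏ l ∈ Ico k n, (2*(l:ℚ)+3)) ≠ 0 :=
    Finset.prod_ne_zero_iff.mpr fun l _ => by positivity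
  have hsign : (-1:ℚ)^(n+1) * (-1:ℚ)^(n+k) = -(-1:ℚ)^k := by
    rw [← pow_add, show n+1+(n+k) = 2*n+1+k by ring, pow_add, pow_add, pow_mul]
    simp
  have hne2 : (2*(n:ℚ)+3) ≠ 0 := by positivity
  have hPk : Pp n * (∏ l ∈ Ico k n, (2*(l:ℚ)+3))⁻¹ = Pp k := by
    rw [← hP, mul_assoc, mul_inv_cancel₀ hne, mul_one]
  have h23 : ((n:ℚ) + 2 + ((n+1 : ℕ):ℚ)) = 2*(n:ℚ)+3 := by push_cast; ring
  rw [bseq, h23, hPn]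
  have h1 : (-1:ℚ)^(n+1) * (Pp n * (2*(n:ℚ)+3)) *
      ((-1:ℚ)^(n+k) * (1/((n:ℚ)+(k:ℚ)+2)) * (∏ l ∈ Ico k n, (2*(l:ℚ)+3))⁻¹ *
        (Amat k).det) / (2*(n:ℚ)+3)
      = ((-1:ℚ)^(n+1) * (-1:ℚ)^(n+k)) *
        ((Pp n * (∏ l ∈ Ico k n, (2*(l:ℚ)+3))⁻¹) * ((2*(n:ℚ)+3) / (2*(n:ℚ)+3)) *
          ((Amat k).det / ((n:ℚ)+(k:ℚ)+2))) := by ring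
  rw [h1, hsign, hPk, div_self hne2]
  have hden : ((n:ℚ) + 2 + (k:ℚ)) ≠ 0 := by positivity
  have h2 : ((n:ℚ)+(k:ℚ)+2) = ((n:ℚ) + 2 + (k:ℚ)) := by ring
  rw [h2]
  field_simp
  ring

theorem cn_det_formula (c : ℕ → ℚ)
    (hc0 : c 0 = 1)
    (hrec : ∀ n : ℕ, 1 ≤ n →
      ∑ k ∈ Finset.range (n + 1), c k / ((n : ℚ) + 1 + (k : ℚ)) = 0) :
    ∀ n : ℕ, 1 ≤ n →
      c n = (-1) ^ n * (∏ i ∈ Finset.range (n + 1), (2 * (i : ℚ) + 1)) *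
        Matrix.det (fun i j : Fin n =>
          if (j : ℕ) + 1 ≤ (i : ℕ) + 2 then
            1 / (((i : ℕ) : ℚ) + 1 + (((j : ℕ) : ℚ) + 1))
          else 0) := by
  have hM : ∀ n : ℕ, (fun i j : Fin n =>
      if (j : ℕ) + 1 ≤ (i : ℕ) + 2 then
        1 / (((i : ℕ) : ℚ) + 1 + (((j : ℕ) : ℚ) + 1)) else 0) = Amat n := by
    intro n; funext i j
    by_cases h : (j : ℕ) ≤ (i : ℕ) + 1
    · have hv : ((i:ℚ) + 1 + ((j:ℚ) + 1)) = (i:ℚ) + (j:ℚ) + 2 := by ring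
      simp [Amat, h, show (j:ℕ)+1 ≤ (i:ℕ)+2 by omega, hv]
    · simp [Amat, h, show ¬ ((j:ℕ)+1 ≤ (i:ℕ)+2) by omega]
  have hcb : ∀ n : ℕ, c n = bseq n := by
    intro n
    induction n using Nat.strong_induction_on with
    | _ n ih =>
      match n with
      | 0 =>
        have : bseq 0 = 1 := by simp [bseq, Pp]
        rw [hc0, this]
      | (m+1) =>
        have h1 := hrec (m+1) (by omega)
        have h2 := brec m
        rw [Finset.sum_range_succ] at h1 h2
        have hsum : ∑ k ∈ range (m+1), c k / (((m+1 : ℕ):ℚ) + 1 + (k:ℚ)) =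
            ∑ k ∈ range (m+1), bseq k / ((m:ℚ) + 2 + (k:ℚ)) := by
          refine Finset.sum_congr rfl fun k hk => ?_
          rw [ih k (Finset.mem_range.mp hk)]
          congr 1
          push_cast; ring
        rw [hsum] at h1
        have e1 : (((m+1 : ℕ):ℚ) + 1 + ((m+1 : ℕ):ℚ)) = ((m:ℚ) + 2 + ((m+1 : ℕ):ℚ)) := by
          push_cast; ring
        rw [e1] at h1
        have hd : ((m:ℚ) + 2 + ((m+1 : ℕ):ℚ)) ≠ 0 := by push_cast; positivity
        have : c (m+1) / ((m:ℚ) + 2 + ((m+1 : ℕ):ℚ)) =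
            bseq (m+1) / ((m:ℚ) + 2 + ((m+1 : ℕ):ℚ)) := by linarith
        field_simp at this
        exact this
  intro n hn
  rw [hM n]
  exact hcb n
end

section
/- For every n ≥ 0, the 2-adic valuation of c_n is v_2(c_n) = −(2n − b(n)), where b(n) is the number of ones in the binary expansion of n; equivalently |c_n|_2 = 2^{2n − b(n)}. In particular c_n ≠ 0 for all n. -/
open Finset

private lemma pv_mono {a b : ℕ} (hab : a ∣ b) (hb : b ≠ 0) :
    padicValNat 2 a ≤ padicValNat 2 b :=
  (padicValNat_dvd_iff_le hb).mp ((pow_padicValNat_dvd).trans hab)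

/-- `G n = n + v₂(n!)`, the claimed negated valuation. -/
private def G (n : ℕ) : ℕ := n + padicValNat 2 n.factorial

private lemma G_eq_digits (n : ℕ) :
    ((2 * n : ℤ) - ((Nat.digits 2 n).sum : ℤ)) = (G n : ℤ) := by
  have h := sub_one_mul_padicValNat_factorial (p := 2) n
  have hb := Nat.digit_sum_le 2 n
  unfold G; omega

/-- the key arithmetic inequality -/
private lemma key_lt {k m : ℕ} (hk : k < m) :
    k + padicValNat 2 k.factorial + padicValNat 2 (m + 2 + k) < G (m + 1) := by
  rcases Nat.even_or_odd (m + 2 + k) with he | ho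
  · obtain ⟨j, hj⟩ := he
    have hj1 : k + 1 ≤ j := by omega
    have hjm : j ≤ m := by omega
    have h2j : padicValNat 2 (m + 2 + k) = 1 + padicValNat 2 j := by
      have : m + 2 + k = 2 * j := by omega
      rw [this, padicValNat.mul (by norm_num) (by omega), padicValNat.self (by norm_num)]
    have hd : k.factorial * j ∣ (m+1).factorial := by
      calc k.factorial * j ∣ (j-1).factorial * j :=
            mul_dvd_mul_right (Nat.factorial_dvd_factorial (by omega)) j
        _ = j.factorial := by
            have h := Nat.factorial_succ (j-1)
            rw [show j-1+1=j from by omega] at h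
            rw [mul_comm]; exact h.symm
        _ ∣ (m+1).factorial := Nat.factorial_dvd_factorial (by omega)
    have := pv_mono hd (Nat.factorial_ne_zero _)
    rw [padicValNat.mul (Nat.factorial_ne_zero _) (by omega)] at this
    unfold G; omega
  · have h0 : padicValNat 2 (m + 2 + k) = 0 :=
      padicValNat.eq_zero_of_not_dvd (by rcases ho with ⟨t, ht⟩; omega)
    have := pv_mono (Nat.factorial_dvd_factorial (le_of_lt (by omega : k < m + 1)))
      (Nat.factorial_ne_zero (m+1))
    unfold G; omega

private lemma pvr_natCast (x : ℕ) : padicValRat 2 (x : ℚ) = padicValNat 2 x := by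
  rw [show ((x:ℚ)) = ((x:ℤ):ℚ) by push_cast; ring, padicValRat.of_int, padicValInt.of_nat]

private lemma lt_sum' {w : ℤ} {F : ℕ → ℚ} {S : Finset ℕ}
    (h : ∀ i ∈ S, F i ≠ 0 ∧ w < padicValRat 2 (F i))
    (h0 : ∑ i ∈ S, F i ≠ 0) : w < padicValRat 2 (∑ i ∈ S, F i) := by
  classical
  induction S using Finset.induction_on with
  | empty => simp at h0
  | insert a s hnot ih =>
    rw [Finset.sum_insert hnot] at h0 ⊢
    by_cases hs : ∑ i ∈ s, F i = 0
    · rw [hs, add_zero]; exact (h a (mem_insert_self a s)).2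
    · have hv := ih (fun i hi => h i (mem_insert_of_mem hi)) hs
      have hva := (h a (mem_insert_self a s)).2
      calc w < min (padicValRat 2 (F a)) (padicValRat 2 (∑ i ∈ s, F i)) := lt_min hva hv
        _ ≤ _ := padicValRat.min_le_padicValRat_add h0

theorem two_adic_valuation (c : ℕ → ℚ)
    (hc0 : c 0 = 1)
    (hrec : ∀ n : ℕ, 1 ≤ n →
      ∑ k ∈ Finset.range (n + 1), c k / ((n : ℚ) + 1 + (k : ℚ)) = 0) :
    ∀ n : ℕ, c n ≠ 0 ∧
      padicValRat 2 (c n) = -((2 * n : ℤ) - ((Nat.digits 2 n).sum : ℤ)) := by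
  suffices H : ∀ n : ℕ, c n ≠ 0 ∧ padicValRat 2 (c n) = -(G n : ℤ) by
    intro n; rw [G_eq_digits n]; exact H n
  intro n
  induction n using Nat.strong_induction_on with
  | _ n IH =>
    match n with
    | 0 => refine ⟨by rw [hc0]; norm_num, by rw [hc0]; simp [G]⟩
    | (m+1) =>
      have hr := hrec (m+1) (by omega)
      have hcast : ∀ k : ℕ, ((m+1:ℕ):ℚ) + 1 + (k:ℚ) = ((m+2+k : ℕ):ℚ) := by
        intro k; push_cast; ring
      simp only [hcast] at hr
      rw [Finset.sum_range_succ, Finset.sum_range_succ] at hr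
      set F : ℕ → ℚ := fun k => c k / ((m+2+k : ℕ):ℚ) with hF
      -- valuations of the terms
      have tv : ∀ k, k ≤ m → F k ≠ 0 ∧
          padicValRat 2 (F k) = -(G k : ℤ) - padicValNat 2 (m+2+k) := by
        intro k hk
        obtain ⟨hck, hvk⟩ := IH k (by omega)
        have hd : ((m+2+k : ℕ):ℚ) ≠ 0 := by positivity
        constructor
        · exact div_ne_zero hck hd
        · rw [hF]; dsimp only
          rw [padicValRat.div hck hd, hvk, pvr_natCast]
      -- G (m+1) in terms of G m
      have hGm : (G (m+1) : ℤ) = (G m : ℤ) + 1 + padicValNat 2 (m+1) := by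
        have h1 : (m+1).factorial = (m+1) * m.factorial := Nat.factorial_succ m
        have h2 : padicValNat 2 ((m+1) * m.factorial)
            = padicValNat 2 (m+1) + padicValNat 2 m.factorial :=
          padicValNat.mul (by omega) (Nat.factorial_ne_zero m)
        unfold G; rw [h1, h2]; push_cast; ring
      -- valuation of the main term F m
      have hFm : padicValRat 2 (F m) = -(G (m+1) : ℤ) := by
        have h2m : padicValNat 2 (m+2+m) = 1 + padicValNat 2 (m+1) := by
          rw [show m+2+m = 2*(m+1) from by omega,
            padicValNat.mul (by norm_num) (by omega), padicValNat.self (by norm_num)]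
        rw [(tv m le_rfl).2, h2m, hGm]; push_cast; ring
      -- all earlier terms have strictly bigger valuation
      have hlt : ∀ k, k < m → -(G (m+1) : ℤ) < padicValRat 2 (F k) := by
        intro k hk
        rw [(tv k (by omega)).2]
        have h := key_lt hk
        have : (k : ℤ) + padicValNat 2 k.factorial + padicValNat 2 (m+2+k)
            < (G (m+1) : ℤ) := by exact_mod_cast h
        have hGk : (G k : ℤ) = k + padicValNat 2 k.factorial := by unfold G; push_cast; ring
        omega
      -- the partial sum
      set T : ℚ := ∑ k ∈ Finset.range m, F k with hT
      have hTA : T + F m ≠ 0 ∧ padicValRat 2 (T + F m) = -(G (m+1) : ℤ) := by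
        by_cases h0 : T = 0
        · rw [h0, zero_add]; exact ⟨(tv m le_rfl).1, hFm⟩
        · have hvT : -(G (m+1) : ℤ) < padicValRat 2 T := by
            apply lt_sum' _ h0
            intro i hi
            have him : i < m := Finset.mem_range.mp hi
            exact ⟨(tv i (by omega)).1, hlt i him⟩
          have hne : T + F m ≠ 0 := by
            intro hz
            have hFmT : F m = -T := by linarith [hz]
            rw [hFmT, padicValRat.neg] at hFm
            omega
          refine ⟨hne, ?_⟩
          rw [add_comm] at hne ⊢
          rw [padicValRat.add_eq_of_lt hne (tv m le_rfl).1 h0 (by rw [hFm]; exact hvT), hFm]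
      -- the odd denominator of the last term
      have hodd : padicValRat 2 ((m+2+(m+1) : ℕ):ℚ) = 0 := by
        rw [pvr_natCast, padicValNat.eq_zero_of_not_dvd (by omega)]
        simp
      have hXne : ((m+2+(m+1) : ℕ):ℚ) ≠ 0 := by positivity
      -- conclude
      have hB : c (m+1) / ((m+2+(m+1) : ℕ):ℚ) = -(T + F m) := by linarith [hr]
      have hcne : c (m+1) ≠ 0 := by
        intro hz
        rw [hz, zero_div] at hB
        exact hTA.1 (by linarith [hB])
      refine ⟨hcne, ?_⟩
      have : padicValRat 2 (c (m+1) / ((m+2+(m+1) : ℕ):ℚ)) = -(G (m+1) : ℤ) := by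
        rw [hB, padicValRat.neg, hTA.2]
      rw [padicValRat.div hcne hXne, hodd, sub_zero] at this
      exact this
end
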